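/- Let α > 2, β ≥ 0, c > 0, N ∈ ℕ, and let 𝒩 = (𝒩_{jk})_{j,k∈ℤ} satisfy |𝒩_{jk}| ≤ c e^{-β|j-k|}/(⟨j⟩⟨k⟩⟨j-k⟩^{α-1}) for all j ≠ ±k. Let (û_{k'k})_{-N≤k',k≤N} be a unitary (2N+1)×(2N+1) matrix. Then for |j| > N and |k| ≤ N, |∑_{k'=-N}^{N} 𝒩_{jk'} û_{k'k}|² ≤ c² c₂ e^{-2β(|j|-N)} / ⟨j⟩⁴, where c₂ is the constant from the convolution lemma with exponent ν = 2. -/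

import Mathlib

/-- ⟨k⟩ = |k| + 1 -/
noncomputable def br (k : ℤ) : ℝ := |(k : ℝ)| + 1

lemma br_pos (k : ℤ) : 0 < br k := by
  unfold br; have := abs_nonneg ((k : ℝ)); linarith

lemma one_le_br (k : ℤ) : 1 ≤ br k := by
  unfold br; have := abs_nonneg ((k : ℝ)); linarith

lemma denom_pos (j k : ℤ) (α : ℝ) : 0 < br k ^ 2 * br (j - k) ^ (2 * α - 2) :=
  mul_pos (pow_pos (br_pos k) 2) (Real.rpow_pos_of_pos (br_pos (j - k)) _)

lemma term_nonneg (j k : ℤ) (α : ℝ) :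
    0 ≤ 1 / (br k ^ 2 * br (j - k) ^ (2 * α - 2)) :=
  le_of_lt (div_pos one_pos (denom_pos j k α))

lemma summable_aux (j : ℤ) (α : ℝ) (hα : 2 < α) :
    Summable (fun k' : ℤ => 1 / (br k' ^ 2 * br (j - k') ^ (2 * α - 2))) := by
  have hbase : Summable (fun k : ℤ => 1 / (|(k:ℝ)|+1)^2) := by
    have hnat : Summable (fun n : ℕ => 1 / ((n:ℝ)+1)^2) := by
      have := (summable_nat_add_iff (f := fun n : ℕ => 1/(n:ℝ)^2) 1).2
        (Real.summable_one_div_nat_pow.mpr one_lt_two)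
      refine this.congr fun n => ?_
      push_cast
      ring_nf
    apply Summable.of_nat_of_neg
    · refine hnat.congr fun n => ?_
      push_cast
      rw [abs_of_nonneg (by positivity)]
    · refine hnat.congr fun n => ?_
      push_cast
      rw [abs_neg, abs_of_nonneg (by positivity)]
  refine Summable.of_nonneg_of_le (fun k => term_nonneg j k α) (fun k => ?_) hbase
  have h1 : (1:ℝ) ≤ br (j - k) ^ (2 * α - 2) :=
    Real.one_le_rpow (one_le_br _) (by linarith)
  have h2 : br k ^ 2 ≤ br k ^ 2 * br (j - k) ^ (2 * α - 2) :=
    le_mul_of_one_le_right (sq_nonneg _) h1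
  have h3 : (|(k:ℝ)|+1)^2 = br k ^ 2 := rfl
  rw [h3]
  exact one_div_le_one_div_of_le (pow_pos (br_pos k) 2) h2

theorem offblock_bound (α β c c₂ : ℝ) (hα : 2 < α) (hβ : 0 ≤ β) (hc : 0 < c) (N : ℕ)
    (𝒩 : ℤ → ℤ → ℂ)
    (h𝒩 : ∀ j k : ℤ, j ≠ k → j ≠ -k →
      ‖𝒩 j k‖ ≤ c * Real.exp (-β * |((j - k : ℤ) : ℝ)|) /
        (br j * br k * br (j - k) ^ (α - 1)))
    (hc₂ : ∀ j : ℤ, ∑' k' : ℤ, 1 / (br k' ^ 2 * br (j - k') ^ (2 * α - 2)) ≤ c₂ / br j ^ 2)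
    (Uh : Matrix (Finset.Icc (-(N : ℤ)) (N : ℤ)) (Finset.Icc (-(N : ℤ)) (N : ℤ)) ℂ)
    (hUh : Uh ∈ Matrix.unitaryGroup (Finset.Icc (-(N : ℤ)) (N : ℤ)) ℂ) :
    ∀ j : ℤ, (N : ℤ) < |j| → ∀ k : Finset.Icc (-(N : ℤ)) (N : ℤ),
      ‖∑ k' : Finset.Icc (-(N : ℤ)) (N : ℤ), 𝒩 j k'.val * Uh k' k‖ ^ 2
        ≤ c ^ 2 * c₂ * Real.exp (-2 * β * (|(j : ℝ)| - N)) / br j ^ 4 := by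
  intro j hj k
  -- column norm of unitary matrix is 1
  have hcol : ∑ k' : Finset.Icc (-(N : ℤ)) (N : ℤ), ‖Uh k' k‖ ^ 2 = 1 := by
    have h1 := hUh.1
    have h2 : (star Uh * Uh) k k = (1 : Matrix (Finset.Icc (-(N : ℤ)) (N : ℤ))
        (Finset.Icc (-(N : ℤ)) (N : ℤ)) ℂ) k k := by rw [h1]
    simp only [Matrix.mul_apply, Matrix.one_apply_eq, Matrix.star_apply,
      Matrix.conjTranspose_apply] at h2
    have h3 : ((∑ k' : Finset.Icc (-(N : ℤ)) (N : ℤ), ‖Uh k' k‖ ^ 2 : ℝ) : ℂ)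
        = ((1:ℝ) : ℂ) := by
      push_cast
      rw [← h2]
      refine Finset.sum_congr rfl fun i _ => ?_
      rw [Complex.star_def, Complex.conj_mul']
    exact_mod_cast h3
  -- Cauchy-Schwarz
  have hCS : ‖∑ k' : Finset.Icc (-(N : ℤ)) (N : ℤ), 𝒩 j k'.val * Uh k' k‖ ^ 2
      ≤ ∑ k' : Finset.Icc (-(N : ℤ)) (N : ℤ), ‖𝒩 j k'.val‖ ^ 2 := by
    have h1 : ‖∑ k' : Finset.Icc (-(N : ℤ)) (N : ℤ), 𝒩 j k'.val * Uh k' k‖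
        ≤ ∑ k' : Finset.Icc (-(N : ℤ)) (N : ℤ), ‖𝒩 j k'.val‖ * ‖Uh k' k‖ := by
      refine (norm_sum_le _ _).trans_eq ?_
      exact Finset.sum_congr rfl fun i _ => norm_mul _ _
    calc ‖∑ k' : Finset.Icc (-(N : ℤ)) (N : ℤ), 𝒩 j k'.val * Uh k' k‖ ^ 2
        ≤ (∑ k' : Finset.Icc (-(N : ℤ)) (N : ℤ), ‖𝒩 j k'.val‖ * ‖Uh k' k‖) ^ 2 := by
          apply pow_le_pow_left₀ (norm_nonneg _) h1
      _ ≤ (∑ k' : Finset.Icc (-(N : ℤ)) (N : ℤ), ‖𝒩 j k'.val‖ ^ 2) *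
            (∑ k' : Finset.Icc (-(N : ℤ)) (N : ℤ), ‖Uh k' k‖ ^ 2) :=
          Finset.sum_mul_sq_le_sq_mul_sq _ _ _
      _ = ∑ k' : Finset.Icc (-(N : ℤ)) (N : ℤ), ‖𝒩 j k'.val‖ ^ 2 := by rw [hcol, mul_one]
  -- bound each term
  set C : ℝ := c ^ 2 * Real.exp (-2 * β * (|(j : ℝ)| - N)) / br j ^ 2 with hC
  have hexp0 : (0:ℝ) ≤ Real.exp (-2 * β * (|(j : ℝ)| - N)) := (Real.exp_pos _).le
  have hterm : ∀ k' : Finset.Icc (-(N : ℤ)) (N : ℤ), ‖𝒩 j k'.val‖ ^ 2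
      ≤ C * (1 / (br k'.val ^ 2 * br (j - k'.val) ^ (2 * α - 2))) := by
    rintro ⟨k', hk'⟩
    simp only []
    have hk'mem : -(N:ℤ) ≤ k' ∧ k' ≤ N := Finset.mem_Icc.mp hk'
    have habs : |k'| ≤ (N:ℤ) := abs_le.mpr hk'mem
    have hne1 : j ≠ k' := fun h => absurd (h ▸ habs) (not_le.mpr hj)
    have hne2 : j ≠ -k' := by
      intro h
      rw [h, abs_neg] at hj
      exact absurd habs (not_le.mpr hj)
    have hb := h𝒩 j k' hne1 hne2
    have hjk : |(j:ℝ)| - N ≤ |((j - k' : ℤ) : ℝ)| := by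
      push_cast
      have h1 : |(j:ℝ)| ≤ |(j:ℝ) - k'| + |(k':ℝ)| := by
        have := abs_sub_abs_le_abs_sub (j:ℝ) (k':ℝ)
        linarith [abs_nonneg ((j:ℝ) - k')]
      have h2 : |(k':ℝ)| ≤ (N:ℝ) := by exact_mod_cast habs
      linarith
    have hexp : Real.exp (-β * |((j - k' : ℤ) : ℝ)|) ^ 2
        ≤ Real.exp (-2 * β * (|(j:ℝ)| - N)) := by
      rw [sq, ← Real.exp_add]
      apply Real.exp_le_exp.mpr
      nlinarith
    have hrpos : (0:ℝ) < br (j - k') ^ (α - 1) := Real.rpow_pos_of_pos (br_pos _) _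
    have hrpow : (br (j - k') ^ (α - 1)) ^ 2 = br (j - k') ^ (2 * α - 2) := by
      rw [← Real.rpow_natCast (br (j - k') ^ (α - 1)) 2, ← Real.rpow_mul (br_pos _).le]
      norm_num
      ring_nf
    have hden : (0:ℝ) < br j ^ 2 * br k' ^ 2 * (br (j - k') ^ (α - 1)) ^ 2 :=
      mul_pos (mul_pos (pow_pos (br_pos j) 2) (pow_pos (br_pos k') 2)) (pow_pos hrpos 2)
    calc ‖𝒩 j k'‖ ^ 2
        ≤ (c * Real.exp (-β * |((j - k' : ℤ) : ℝ)|) /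
            (br j * br k' * br (j - k') ^ (α - 1))) ^ 2 :=
          pow_le_pow_left₀ (norm_nonneg _) hb 2
      _ = c ^ 2 * Real.exp (-β * |((j - k' : ℤ) : ℝ)|) ^ 2 /
            (br j ^ 2 * br k' ^ 2 * (br (j - k') ^ (α - 1)) ^ 2) := by ring
      _ ≤ c ^ 2 * Real.exp (-2 * β * (|(j:ℝ)| - N)) /
            (br j ^ 2 * br k' ^ 2 * (br (j - k') ^ (α - 1)) ^ 2) := by
          exact (div_le_div_iff_of_pos_right hden).mpr (mul_le_mul_of_nonneg_left hexp (sq_nonneg c))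
      _ = C * (1 / (br k' ^ 2 * br (j - k') ^ (2 * α - 2))) := by
          rw [← hrpow, hC, div_mul_div_comm, mul_one, ← mul_assoc]
  have hsum1 : ∑ k' : Finset.Icc (-(N : ℤ)) (N : ℤ), ‖𝒩 j k'.val‖ ^ 2
      ≤ C * ∑ k' : Finset.Icc (-(N : ℤ)) (N : ℤ),
          1 / (br k'.val ^ 2 * br (j - k'.val) ^ (2 * α - 2)) := by
    rw [Finset.mul_sum]
    exact Finset.sum_le_sum fun i _ => hterm i
  have hC0 : 0 ≤ C :=
    div_nonneg (mul_nonneg (sq_nonneg c) hexp0) (pow_nonneg (br_pos j).le 2)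
  have hsum2 : ∑ k' : Finset.Icc (-(N : ℤ)) (N : ℤ),
      1 / (br k'.val ^ 2 * br (j - k'.val) ^ (2 * α - 2)) ≤ c₂ / br j ^ 2 := by
    refine le_trans ?_ (hc₂ j)
    rw [Finset.sum_coe_sort (Finset.Icc (-(N : ℤ)) (N : ℤ))
      (fun k' => 1 / (br k' ^ 2 * br (j - k') ^ (2 * α - 2)))]
    exact Summable.sum_le_tsum _ (fun i _ => term_nonneg j i α) (summable_aux j α hα)
  calc ‖∑ k' : Finset.Icc (-(N : ℤ)) (N : ℤ), 𝒩 j k'.val * Uh k' k‖ ^ 2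
      ≤ ∑ k' : Finset.Icc (-(N : ℤ)) (N : ℤ), ‖𝒩 j k'.val‖ ^ 2 := hCS
    _ ≤ C * ∑ k' : Finset.Icc (-(N : ℤ)) (N : ℤ),
          1 / (br k'.val ^ 2 * br (j - k'.val) ^ (2 * α - 2)) := hsum1
    _ ≤ C * (c₂ / br j ^ 2) := mul_le_mul_of_nonneg_left hsum2 hC0
    _ = c ^ 2 * c₂ * Real.exp (-2 * β * (|(j : ℝ)| - N)) / br j ^ 4 := by
        rw [hC]
        have h0 : br j ≠ 0 := (br_pos j).ne'
        field_simp
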